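/- Let f be a polynomial in (B/p^mB)[x₁,…,xₙ] such that at least one coefficient of f is a nonzero divisor of B/p^mB, and let g be a nonzero polynomial in (B/p^mB)[x₁,…,xₙ]. If n is the largest natural number such that the class of p^n divides g (i.e., p^n divides every coefficient of a lift of g, and p^{n+1} does not), then the class of p^{n+1} does not divide f·g. -/

import Mathlib

open MvPolynomial

/-- Proposition 2.2: let `R = B ⧸ p ^ m B` (`m ≥ 2`), `f, g ∈ R[x₁,…,xₙ]` with some
coefficient of `f` a nonzero divisor and `g ≠ 0`.  If `N` is the largest natural number
such that the class of `p ^ N` divides every coefficient of `g`, then the class of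
`p ^ (N + 1)` does not divide every coefficient of `f * g`. -/
theorem stmt2 {B : Type*} [CommRing B] [IsDomain B] [IsPrincipalIdealRing B]
    (p : B) (hp : Prime p) (m : ℕ) (hm : 2 ≤ m) (n : ℕ)
    (f g : MvPolynomial (Fin n) (B ⧸ Ideal.span {p ^ m}))
    (hf : ∃ d, MvPolynomial.coeff d f ∈ nonZeroDivisors (B ⧸ Ideal.span {p ^ m}))
    (hg : g ≠ 0) (N : ℕ)
    (hdvd : ∀ d, (Ideal.Quotient.mk (Ideal.span {p ^ m}) p) ^ N ∣ MvPolynomial.coeff d g)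
    (hmax : ¬ ∀ d, (Ideal.Quotient.mk (Ideal.span {p ^ m}) p) ^ (N + 1) ∣
        MvPolynomial.coeff d g) :
    ¬ ∀ d, (Ideal.Quotient.mk (Ideal.span {p ^ m}) p) ^ (N + 1) ∣
        MvPolynomial.coeff d (f * g) := by
  classical
  intro H
  set q : B ⧸ Ideal.span {p ^ m} := Ideal.Quotient.mk (Ideal.span {p ^ m}) p with hq
  have hqm : q ^ m = 0 := by
    rw [hq, ← map_pow]
    exact Ideal.Quotient.eq_zero_iff_mem.mpr (Ideal.mem_span_singleton_self _)
  -- N < m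
  have hNm : N < m := by
    by_contra hN
    push_neg at hN
    apply hg
    ext d
    obtain ⟨c, hc⟩ := hdvd d
    have hq0 : q ^ N = 0 := by
      have : q ^ N = q ^ m * q ^ (N - m) := by rw [← pow_add]; congr 1; omega
      rw [this, hqm, zero_mul]
    simp [hc, hq0]
  have hle : Ideal.span {p ^ m} ≤ Ideal.span {p} :=
    Ideal.span_singleton_le_span_singleton.mpr (dvd_pow_self p (by omega : m ≠ 0))
  set π : (B ⧸ Ideal.span {p ^ m}) →+* B ⧸ Ideal.span {p} :=
    Ideal.Quotient.factor hle with hπ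
  haveI : (Ideal.span {p} : Ideal B).IsPrime :=
    (Ideal.span_singleton_prime hp.ne_zero).mpr hp
  -- key : if q^(N+1) ∣ q^N * c then π c = 0
  have key : ∀ c : B ⧸ Ideal.span {p ^ m}, q ^ (N + 1) ∣ q ^ N * c → π c = 0 := by
    intro c hc
    obtain ⟨c', rfl⟩ := Ideal.Quotient.mk_surjective c
    obtain ⟨d, hd⟩ := hc
    obtain ⟨d', rfl⟩ := Ideal.Quotient.mk_surjective d
    have h0 : (Ideal.Quotient.mk (Ideal.span {p ^ m}))
        (p ^ N * c' - p ^ (N + 1) * d') = 0 := by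
      rw [map_sub, map_mul, map_mul, map_pow, map_pow, ← hq, hd]
      ring
    rw [Ideal.Quotient.eq_zero_iff_mem, Ideal.mem_span_singleton] at h0
    obtain ⟨e, he⟩ := h0
    have hcancel : c' - p * d' = p ^ (m - N) * e := by
      apply mul_left_cancel₀ (pow_ne_zero N hp.ne_zero)
      calc p ^ N * (c' - p * d') = p ^ N * c' - p ^ (N + 1) * d' := by ring
        _ = p ^ m * e := he
        _ = p ^ N * (p ^ (m - N) * e) := by rw [← mul_assoc, ← pow_add]; congr 2; omega
    have hpc : p ∣ c' := by
      have h1 : p ∣ p ^ (m - N) * e := Dvd.dvd.mul_right (dvd_pow_self p (by omega)) e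
      rw [← hcancel] at h1
      have := dvd_add h1 (Dvd.intro d' rfl)
      simpa using this
    have : π ((Ideal.Quotient.mk (Ideal.span {p ^ m})) c') =
        (Ideal.Quotient.mk (Ideal.span {p})) c' := rfl
    rw [this, Ideal.Quotient.eq_zero_iff_mem, Ideal.mem_span_singleton]
    exact hpc
  -- construct h with g = C (q^N) * h
  set c0 : (Fin n →₀ ℕ) → B ⧸ Ideal.span {p ^ m} := fun d => (hdvd d).choose with hc0def
  have hc0 : ∀ d, MvPolynomial.coeff d g = q ^ N * c0 d := fun d => (hdvd d).choose_spec
  set h : MvPolynomial (Fin n) (B ⧸ Ideal.span {p ^ m}) :=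
    ∑ d ∈ g.support, monomial d (c0 d) with hhdef
  have hcoeffh : ∀ e, MvPolynomial.coeff e h = if e ∈ g.support then c0 e else 0 := by
    intro e
    rw [hhdef, MvPolynomial.coeff_sum]
    simp only [coeff_monomial]
    exact Finset.sum_ite_eq' g.support e c0
  have hgh : MvPolynomial.C (q ^ N) * h = g := by
    ext e
    rw [coeff_C_mul, hcoeffh]
    by_cases he : e ∈ g.support
    · rw [if_pos he, ← hc0]
    · rw [if_neg he, mul_zero, eq_comm]
      exact MvPolynomial.notMem_support_iff.mp he
  -- map π (f * h) = 0
  have hmap0 : MvPolynomial.map π (f * h) = 0 := by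
    ext e
    rw [coeff_map, coeff_zero]
    apply key
    have hcoe : q ^ N * MvPolynomial.coeff e (f * h) = MvPolynomial.coeff e (f * g) := by
      rw [← hgh, show f * (MvPolynomial.C (q ^ N) * h)
        = MvPolynomial.C (q ^ N) * (f * h) by ring, coeff_C_mul]
    rw [hcoe]
    exact H e
  -- map π h ≠ 0
  obtain ⟨d0, hd0⟩ := not_forall.mp hmax
  have hd0s : d0 ∈ g.support := by
    rw [MvPolynomial.mem_support_iff]
    intro h0
    exact hd0 (h0 ▸ dvd_zero _)
  have hπh : MvPolynomial.map π h ≠ 0 := by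
    intro hz
    have hcz : π (c0 d0) = 0 := by
      have := congrArg (MvPolynomial.coeff d0) hz
      rwa [coeff_map, hcoeffh, if_pos hd0s, coeff_zero] at this
    obtain ⟨c', hcc⟩ := Ideal.Quotient.mk_surjective (c0 d0)
    rw [← hcc] at hcz
    have : (Ideal.Quotient.mk (Ideal.span {p})) c' = 0 := hcz
    rw [Ideal.Quotient.eq_zero_iff_mem, Ideal.mem_span_singleton] at this
    obtain ⟨e, he⟩ := this
    apply hd0
    rw [hc0 d0, ← hcc, he]
    exact ⟨Ideal.Quotient.mk _ e, by rw [map_mul, ← hq]; ring⟩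
  -- map π f ≠ 0
  obtain ⟨df, hdf⟩ := hf
  have hπf : MvPolynomial.map π f ≠ 0 := by
    intro hz
    have hcz : π (MvPolynomial.coeff df f) = 0 := by
      have := congrArg (MvPolynomial.coeff df) hz
      rwa [coeff_map, coeff_zero] at this
    obtain ⟨c', hcc⟩ := Ideal.Quotient.mk_surjective (MvPolynomial.coeff df f)
    rw [← hcc] at hcz
    have : (Ideal.Quotient.mk (Ideal.span {p})) c' = 0 := hcz
    rw [Ideal.Quotient.eq_zero_iff_mem, Ideal.mem_span_singleton] at this
    obtain ⟨e, he⟩ := this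
    have hm1 : p ^ m = p * p ^ (m - 1) := by
      rw [← pow_succ']
      congr 1
      omega
    have hmul : q ^ (m - 1) * MvPolynomial.coeff df f = 0 := by
      rw [← hcc, he, hq, ← map_pow, ← map_mul, Ideal.Quotient.eq_zero_iff_mem,
        Ideal.mem_span_singleton]
      exact ⟨e, by rw [hm1]; ring⟩
    have hq0 : q ^ (m - 1) = 0 := mem_nonZeroDivisors_iff_right.mp hdf _ hmul
    rw [hq, ← map_pow, Ideal.Quotient.eq_zero_iff_mem, Ideal.mem_span_singleton] at hq0
    obtain ⟨k, hk⟩ := hq0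
    have h1 : (1 : B) = p * k := by
      apply mul_left_cancel₀ (pow_ne_zero (m - 1) hp.ne_zero)
      rw [mul_one, ← mul_assoc]
      calc p ^ (m - 1) = p ^ m * k := hk
        _ = p ^ (m - 1) * p * k := by rw [← pow_succ]; congr 2; omega
    exact hp.not_isUnit (IsUnit.of_mul_eq_one k h1.symm)
  rw [map_mul] at hmap0
  rcases mul_eq_zero.mp hmap0 with h1 | h1
  · exact hπf h1
  · exact hπh h1
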